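/- Let m ≥ 1 and let d₁, …, d_m be real numbers with d_i ≥ 1 for all i. Define S₁ = Σ_{i≠j} (d_i/d_j + d_j/d_i) and S₂ = Σ_{i≠j} (d_i d_j + 1/(d_i d_j)), where the sums run over ordered pairs of distinct indices. Then 2/(m+1) + S₁/(4m(m+1)) + S₂/(4m(m+1)) ≥ 3/(m+2) + S₁/(2m(m+2)). -/
import Mathlib


noncomputable section

/-- `S₁ = Σ_{i≠j} (d_i/d_j + d_j/d_i)`, summed over ordered pairs of distinct indices. -/
def S1 {m : ℕ} (d : Fin m → ℝ) : ℝ :=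
  ∑ i, ∑ j, if i ≠ j then d i / d j + d j / d i else 0

/-- `S₂ = Σ_{i≠j} (d_i d_j + 1/(d_i d_j))`, summed over ordered pairs of distinct indices. -/
def S2 {m : ℕ} (d : Fin m → ℝ) : ℝ :=
  ∑ i, ∑ j, if i ≠ j then d i * d j + 1 / (d i * d j) else 0

lemma S1_le_S2 {m : ℕ} (d : Fin m → ℝ) (hd : ∀ i, 1 ≤ d i) : S1 d ≤ S2 d := by
  unfold S1 S2
  apply Finset.sum_le_sum
  intro i _
  apply Finset.sum_le_sum
  intro j _
  by_cases h : i ≠ j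
  · rw [if_pos h, if_pos h]
    have ha := hd i; have hb := hd j
    have ha0 : (0:ℝ) < d i := by linarith
    have hb0 : (0:ℝ) < d j := by linarith
    rw [← sub_nonneg]
    have heq : d i * d j + 1 / (d i * d j) - (d i / d j + d j / d i) =
        ((d i ^ 2 - 1) * (d j ^ 2 - 1)) / (d i * d j) := by
      field_simp; ring
    rw [heq]
    apply div_nonneg _ (by positivity)
    have h1 : (0:ℝ) ≤ d i ^ 2 - 1 := by nlinarith
    have h2 : (0:ℝ) ≤ d j ^ 2 - 1 := by nlinarith
    exact mul_nonneg h1 h2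
  · simp [h]

lemma S2_ge {m : ℕ} (d : Fin m → ℝ) (hd : ∀ i, 1 ≤ d i) :
    2 * m * (m - 1) ≤ S2 d := by
  unfold S2
  have key : ∀ i j : Fin m, (if i ≠ j then (2:ℝ) else 0) ≤
      (if i ≠ j then d i * d j + 1 / (d i * d j) else 0) := by
    intro i j
    by_cases h : i ≠ j
    · rw [if_pos h, if_pos h]
      have ha := hd i; have hb := hd j
      have h1 : (1:ℝ) ≤ d i * d j := one_le_mul_of_one_le_of_one_le ha hb
      have h0 : (0:ℝ) < d i * d j := by linarith
      have heq : d i * d j + 1 / (d i * d j) - 2 = (d i * d j - 1) ^ 2 / (d i * d j) := by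
        field_simp; ring
      nlinarith [div_nonneg (sq_nonneg (d i * d j - 1)) h0.le]
    · simp [h]
  calc (2:ℝ) * m * (m - 1) = ∑ i : Fin m, ∑ j : Fin m, (if i ≠ j then (2:ℝ) else 0) := by
        have hrow : ∀ i : Fin m, ∑ j : Fin m, (if i ≠ j then (2:ℝ) else 0) = 2 * (m - 1) := by
          intro i
          have h1 : ∀ j : Fin m, (if i ≠ j then (2:ℝ) else 0) = 2 - (if i = j then 2 else 0) := by
            intro j; by_cases h : i = j <;> simp [h]
          rw [Finset.sum_congr rfl fun j _ => h1 j, Finset.sum_sub_distrib,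
            Finset.sum_ite_eq, Finset.sum_const, Finset.card_univ, Fintype.card_fin]
          simp; ring
        rw [Finset.sum_congr rfl fun i _ => hrow i, Finset.sum_const, Finset.card_univ,
          Fintype.card_fin]
        simp; ring
    _ ≤ _ := Finset.sum_le_sum fun i _ => Finset.sum_le_sum fun j _ => key i j

theorem unitary_average_ge_orthogonal_average (m : ℕ) (hm : 1 ≤ m)
    (d : Fin m → ℝ) (hd : ∀ i, 1 ≤ d i) :
    3 / ((m : ℝ) + 2) + S1 d / (2 * m * (m + 2)) ≤
      2 / ((m : ℝ) + 1) + S1 d / (4 * m * (m + 1)) + S2 d / (4 * m * (m + 1)) := by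
  have hM : (1:ℝ) ≤ m := by exact_mod_cast hm
  have h12 := S1_le_S2 d hd
  have h2b := S2_ge d hd
  set M : ℝ := (m:ℝ)
  have hM0 : (0:ℝ) < M := by linarith
  rw [← sub_nonneg]
  have heq : 2 / (M + 1) + S1 d / (4 * M * (M + 1)) + S2 d / (4 * M * (M + 1)) -
      (3 / (M + 2) + S1 d / (2 * M * (M + 2))) =
      ((M + 2) * S2 d - 4 * M * (M - 1) - M * S1 d) / (4 * M * (M + 1) * (M + 2)) := by
    field_simp
    ring
  rw [heq]
  apply div_nonneg _ (by positivity)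
  nlinarith
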